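/- Let G be a connected even graph and let 𝒞 be any cycle decomposition of G, with cycle intersection graph CI(G) a multigraph (not necessarily simple). Then for every spanning tree T of CI(G), ∇(G) ≤ (|E(CI(G))| − |V(CI(G))| + 1) + |MSF(T)|, where |E(CI(G))| counts one edge for each intersection vertex of each pair of distinct cycles of 𝒞. -/

import Mathlib

open SimpleGraph

variable {V : Type*}

/-- A graph is *even* if every vertex has even degree. -/
def IsEvenGraph (G : SimpleGraph V) : Prop :=
  ∀ v : V, Even (G.neighborSet v).ncard

/-- A subgraph is a *cycle* if it is connected and every one of its vertices has degree 2. -/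
def IsCycleSubgraph {G : SimpleGraph V} (H : G.Subgraph) : Prop :=
  H.Connected ∧ ∀ v ∈ H.verts, (H.neighborSet v).ncard = 2

/-- A *cycle decomposition* of `G` is a family of cycle subgraphs such that every edge of `G`
lies in exactly one of them. -/
def IsCycleDecomposition (G : SimpleGraph V) (𝒞 : Set G.Subgraph) : Prop :=
  (∀ C ∈ 𝒞, IsCycleSubgraph C) ∧ ∀ e ∈ G.edgeSet, ∃! C, C ∈ 𝒞 ∧ e ∈ SimpleGraph.Subgraph.edgeSet C

/-- The edges of the cycle intersection *multigraph* of a cycle decomposition `𝒞`: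
one edge joining `C` and `C'` for each pair of distinct cycles `C ≠ C'` of `𝒞` and each
vertex `v` lying on both (the edge is labelled by `v`). -/
def CIEdges (G : SimpleGraph V) (𝒞 : Set G.Subgraph) : Set (Sym2 G.Subgraph × V) :=
  {p | ∃ C ∈ 𝒞, ∃ C' ∈ 𝒞, ∃ v : V, C ≠ C' ∧
    v ∈ C.verts ∩ SimpleGraph.Subgraph.verts C' ∧ p = (s(C, C'), v)}

/-- The underlying simple graph of the cycle intersection graph of a cycle decomposition:
two distinct cycles are adjacent iff they share a vertex. -/
def CIGraph (G : SimpleGraph V) (𝒞 : Set G.Subgraph) : SimpleGraph 𝒞 where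
  Adj C D := C ≠ D ∧ ((C : G.Subgraph).verts ∩ (D : G.Subgraph).verts).Nonempty
  symm := ⟨by
    rintro C D ⟨h1, h2⟩
    exact ⟨h1.symm, by rwa [Set.inter_comm] at h2⟩⟩
  loopless := ⟨by rintro C ⟨h1, _⟩; exact h1 rfl⟩

/-- The cycle intersection graph is *simple* iff any two distinct cycles of the decomposition
intersect in at most one vertex. -/
def CISimple (G : SimpleGraph V) (𝒞 : Set G.Subgraph) : Prop :=
  ∀ C ∈ 𝒞, ∀ D ∈ 𝒞, C ≠ D →
    ((C : G.Subgraph).verts ∩ (D : G.Subgraph).verts).ncard ≤ 1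

/-- `S` is a decycling set of `G` iff `G - S` is acyclic. -/
def IsDecyclingSet (G : SimpleGraph V) (S : Set V) : Prop :=
  (G.induce Sᶜ).IsAcyclic

/-- The decycling number of `G`: the minimum size of a decycling set. -/
noncomputable def decyclingNumber (G : SimpleGraph V) : ℕ :=
  sInf {n | ∃ S : Set V, IsDecyclingSet G S ∧ S.ncard = n}

/-- The *size* of a spanning forest: its number of edges plus its number of isolated vertices. -/
noncomputable def forestSize {W : Type*} (F : SimpleGraph W) : ℕ :=
  F.edgeSet.ncard + {v : W | ∀ w, ¬ F.Adj v w}.ncard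

/-- The minimum size of a spanning forest of `H` (a spanning forest is an acyclic spanning
subgraph; note a subgraph `F ≤ H` on the same vertex type is automatically spanning). -/
noncomputable def MSF {W : Type*} (H : SimpleGraph W) : ℕ :=
  sInf {n | ∃ F ≤ H, F.IsAcyclic ∧ forestSize F = n}


lemma aux_no_triangle {W : Type*} {T : SimpleGraph W} (hT : T.IsAcyclic)
    {a b c : W} (hab : T.Adj a b) (hbc : T.Adj b c) (hca : T.Adj c a) : False := by
  refine hT (Walk.cons hab (Walk.cons hbc (Walk.cons hca Walk.nil))) ?_
  rw [Walk.isCycle_def, Walk.isTrail_def]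
  refine ⟨?_, by simp, ?_⟩
  · simp [Sym2.eq_iff, hab.ne, hbc.ne, hca.ne, hab.ne', hbc.ne', hca.ne', Ne.symm]
  · simp [hab.ne', hbc.ne, hca.ne, hca.ne']


private lemma aux_mem_right {α : Type*} {x y : α} {e : Sym2 α} (h : e = s(x, y)) : y ∈ e := by
  subst h; simp

lemma aux_tree_edges_within {W : Type*} [Fintype W] {T : SimpleGraph W} (hT : T.IsTree)
    (U : Finset W) (hU : U.Nonempty) (E : Finset (Sym2 W))
    (hE : ∀ e ∈ E, e ∈ T.edgeSet ∧ ∀ x ∈ e, x ∈ U) : E.card + 1 ≤ U.card := by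
  classical
  have : Nonempty W := hT.isConnected.nonempty
  obtain ⟨r⟩ := this
  haveI : Nonempty W := ⟨r⟩
  choose f hf hu using fun v => hT.existsUnique_path v r
  set len : W → ℕ := fun v => (f v).length with hlen
  have step : ∀ a b (hab : T.Adj a b),
      f a = Walk.cons hab (f b) ∨ f b = Walk.cons hab.symm (f a) := by
    intro a b hab
    by_cases hmem : a ∈ (f b).support
    · right
      have hdrop : ((f b).dropUntil a hmem).IsPath := (hf b).dropUntil hmem
      have hda : (f b).dropUntil a hmem = f a := hu a _ hdrop
      have htake : ((f b).takeUntil a hmem) = Walk.cons hab.symm Walk.nil := by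
        have h1 : ((f b).takeUntil a hmem).IsPath := (hf b).takeUntil hmem
        have h2 : (Walk.cons hab.symm Walk.nil : T.Walk b a).IsPath := by
          simp [hab.ne']
        exact (hT.existsUnique_path b a).unique h1 h2
      have := (f b).take_spec hmem
      rw [htake, hda] at this
      simpa using this.symm
    · left
      exact (hu a _ ((hf b).cons hmem)).symm
  set next : W → W := fun v => (f v).getVert 1 with hnext
  have key : ∀ e ∈ E, ∃ x, x ∈ e ∧ e = s(x, next x) ∧ ∀ y ∈ e, len y ≤ len x := by
    intro e
    induction e using Sym2.ind with
    | _ a b =>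
    intro he
    have hab : T.Adj a b := (hE _ he).1
    rcases step a b hab with h | h
    · refine ⟨a, by simp, ?_, ?_⟩
      · have : next a = b := by rw [hnext]; simp [h]
        rw [this]
      · intro y hy
        have hlab : len a = len b + 1 := by simp only [hlen, h]; simp
        rcases Sym2.mem_iff.mp hy with rfl | rfl <;> omega
    · refine ⟨b, by simp, ?_, ?_⟩
      · have : next b = a := by rw [hnext]; simp [h]
        rw [this, Sym2.eq_swap]
      · intro y hy
        have hlab : len b = len a + 1 := by simp only [hlen, h]; simp
        rcases Sym2.mem_iff.mp hy with rfl | rfl <;> omega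
  have key2 : ∀ e : Sym2 W, ∃ x, e ∈ E → (x ∈ e ∧ e = s(x, next x) ∧ ∀ y ∈ e, len y ≤ len x) := by
    intro e
    by_cases he : e ∈ E
    · obtain ⟨x, h⟩ := key e he
      exact ⟨x, fun _ => h⟩
    · exact ⟨r, fun h => absurd h he⟩
  choose g gspec using key2
  obtain ⟨u0, hu0U, hmin⟩ := U.exists_min_image len hU
  have himg : ∀ e ∈ E, g e ∈ U.erase u0 := by
    intro e he
    obtain ⟨hx1, hx2, hx3⟩ := gspec e he
    refine Finset.mem_erase.mpr ⟨?_, (hE e he).2 _ hx1⟩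
    intro hgu
    have hadj : T.Adj (g e) (next (g e)) := by
      have h5 := (hE e he).1
      rw [hx2] at h5
      exact h5
    have hnU : next (g e) ∈ U := (hE e he).2 _ (aux_mem_right hx2)
    have hle : len (next (g e)) ≤ len (g e) := hx3 _ (aux_mem_right hx2)
    have h3 : len u0 ≤ len (next (g e)) := hmin _ hnU
    have h4 : len u0 = len (g e) := by rw [hgu]
    rcases step _ _ hadj with h | h
    · have h1 : len (g e) = len (next (g e)) + 1 := by simp only [hlen, h]; simp
      omega
    · have h1 : len (next (g e)) = len (g e) + 1 := by simp only [hlen, h]; simp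
      omega
  have hcard : E.card ≤ (U.erase u0).card := by
    refine Finset.card_le_card_of_injOn g (fun e he => himg e he) ?_
    intro e he e' he' hgg
    simp only [Finset.mem_coe] at he he'
    rw [(gspec e he).2.1, (gspec e' he').2.1, hgg]
  rw [Finset.card_erase_of_mem hu0U] at hcard
  have : 1 ≤ U.card := Finset.card_pos.mpr hU
  omega


private lemma aux_two_of_edge {V : Type*} [Fintype V] [DecidableEq V] {G : SimpleGraph V}
    {C : G.Subgraph} {e : Sym2 V} (he : e ∈ C.edgeSet) :
    (Finset.univ.filter (· ∈ e)).card = 2 := by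
  induction e using Sym2.ind with
  | _ a b =>
    have hab : a ≠ b := (C.adj_sub (Subgraph.mem_edgeSet.mp he)).ne
    have : (Finset.univ.filter (· ∈ s(a, b))) = {a, b} := by
      ext x; simp [Sym2.mem_iff]
    rw [this, Finset.card_insert_of_notMem (by simp [hab]), Finset.card_singleton]

lemma aux_percycle {V : Type*} [Fintype V] [DecidableEq V] {G : SimpleGraph V} {C : G.Subgraph}
    (hCconn : C.Connected) (hC2 : ∀ v ∈ C.verts, (C.neighborSet v).ncard = 2)
    {S : Set V} (hs : ∃ s ∈ C.verts, s ∈ S)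
    (A : Finset (Sym2 V)) (hA : ∀ e ∈ A, e ∈ C.edgeSet ∧ ∀ x ∈ e, x ∉ S)
    (hne : A.Nonempty) :
    A.card + 1 ≤ (A.biUnion (fun e => Finset.univ.filter (· ∈ e))).card := by
  classical
  set WA := A.biUnion (fun e => Finset.univ.filter (· ∈ e)) with hWA
  have hmemWA : ∀ {x : V} {e : Sym2 V}, e ∈ A → x ∈ e → x ∈ WA := by
    intro x e he hx
    rw [hWA]; exact Finset.mem_biUnion.mpr ⟨e, he, by simp [hx]⟩
  have hWAverts : ∀ w ∈ WA, w ∈ C.verts := by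
    intro w hw
    rw [hWA] at hw
    obtain ⟨e, he, hwe⟩ := Finset.mem_biUnion.mp hw
    simp only [Finset.mem_filter] at hwe
    exact Subgraph.mem_verts_of_mem_edge (hA e he).1 hwe.2
  by_contra hcon
  push_neg at hcon
  have hcon' : WA.card ≤ A.card := by omega
  set deg : V → ℕ := fun w => (A.filter (fun e => w ∈ e)).card with hdeg
  have hsum : ∑ w ∈ WA, deg w = 2 * A.card := by
    have h1 : ∀ w, deg w = ∑ e ∈ A, if w ∈ e then 1 else 0 := by
      intro w; simp only [hdeg]; exact Finset.card_filter _ _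
    calc ∑ w ∈ WA, deg w = ∑ w ∈ WA, ∑ e ∈ A, if w ∈ e then 1 else 0 := by
          exact Finset.sum_congr rfl fun w _ => h1 w
      _ = ∑ e ∈ A, ∑ w ∈ WA, if w ∈ e then 1 else 0 := Finset.sum_comm
      _ = ∑ e ∈ A, (WA.filter (· ∈ e)).card := by
          exact Finset.sum_congr rfl fun e _ => by rw [Finset.card_filter]
      _ = ∑ e ∈ A, 2 := by
          refine Finset.sum_congr rfl fun e he => ?_
          have : WA.filter (· ∈ e) = Finset.univ.filter (· ∈ e) := by
            ext x
            simp only [Finset.mem_filter, Finset.mem_univ, true_and]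
            exact ⟨fun h => h.2, fun h => ⟨hmemWA he h, h⟩⟩
          rw [this, aux_two_of_edge (hA e he).1]
      _ = 2 * A.card := by rw [Finset.sum_const, smul_eq_mul, mul_comm]
  have hdegle : ∀ w ∈ WA, deg w ≤ 2 := by
    intro w hw
    have hwv := hWAverts w hw
    have : deg w ≤ ((C.neighborSet w).toFinite.toFinset).card := by
      rw [hdeg]
      refine Finset.card_le_card_of_injOn (fun e => if h : w ∈ e then Sym2.Mem.other' h else w)
        ?_ ?_
      · intro e he
        simp only [Finset.mem_coe, Finset.mem_filter] at he
        dsimp only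
        rw [dif_pos he.2]
        simp only [Finset.mem_coe, Set.Finite.mem_toFinset, Subgraph.mem_neighborSet]
        have h1 : s(w, Sym2.Mem.other' he.2) = e := Sym2.other_spec' he.2
        have := (hA e he.1).1
        rw [← h1] at this
        exact Subgraph.mem_edgeSet.mp this
      · intro e he e' he' hee
        simp only [Finset.mem_coe, Finset.mem_filter] at he he'
        simp only [dif_pos he.2, dif_pos he'.2] at hee
        rw [← Sym2.other_spec' he.2, ← Sym2.other_spec' he'.2, hee]
    rwa [← Set.ncard_eq_toFinset_card _ (Set.toFinite _), hC2 w hwv] at this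
  have hall2 : ∀ w ∈ WA, deg w = 2 := by
    by_contra hcon2
    push_neg at hcon2
    obtain ⟨w0, hw0, hw0ne⟩ := hcon2
    have hlt : ∑ w ∈ WA, deg w < ∑ w ∈ WA, 2 :=
      Finset.sum_lt_sum (fun w hw => hdegle w hw)
        ⟨w0, hw0, lt_of_le_of_ne (hdegle w0 hw0) hw0ne⟩
    rw [Finset.sum_const, smul_eq_mul, hsum] at hlt
    omega
  have closure : ∀ w x, w ∈ WA → C.Adj w x → x ∈ WA := by
    intro w x hw hadj
    have h2 : (A.filter (fun e => w ∈ e)).card = 2 := hall2 w hw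
    obtain ⟨e1, e2, hne12, hfeq⟩ := Finset.card_eq_two.mp h2
    have he1 : e1 ∈ A ∧ w ∈ e1 := by
      have : e1 ∈ A.filter (fun e => w ∈ e) := by rw [hfeq]; simp
      simpa using this
    have he2 : e2 ∈ A ∧ w ∈ e2 := by
      have : e2 ∈ A.filter (fun e => w ∈ e) := by rw [hfeq]; simp
      simpa using this
    set x1 := Sym2.Mem.other' he1.2 with hx1
    set x2 := Sym2.Mem.other' he2.2 with hx2
    have hs1 : s(w, x1) = e1 := Sym2.other_spec' he1.2
    have hs2 : s(w, x2) = e2 := Sym2.other_spec' he2.2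
    have hx12 : x1 ≠ x2 := by
      intro h; apply hne12; rw [← hs1, ← hs2, h]
    have hn1 : x1 ∈ C.neighborSet w := by
      have := (hA e1 he1.1).1; rw [← hs1] at this
      exact Subgraph.mem_edgeSet.mp this
    have hn2 : x2 ∈ C.neighborSet w := by
      have := (hA e2 he2.1).1; rw [← hs2] at this
      exact Subgraph.mem_edgeSet.mp this
    have hnb : ({x1, x2} : Set V) = C.neighborSet w := by
      refine Set.eq_of_subset_of_ncard_le ?_ ?_ (Set.toFinite _)
      · rintro y (rfl | rfl)
        exacts [hn1, hn2]
      · rw [hC2 w (hWAverts w hw), Set.ncard_pair hx12]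
    have hx' : x ∈ ({x1, x2} : Set V) := by rw [hnb]; exact hadj
    rcases hx' with rfl | rfl
    · exact hmemWA he1.1 (by rw [← hs1]; simp)
    · exact hmemWA he2.1 (by rw [← hs2]; simp)
  -- walk from a vertex of WA to the S-vertex
  obtain ⟨s0, hs0v, hs0S⟩ := hs
  obtain ⟨e0, he0⟩ := hne
  set a0 := e0.out.1 with ha0def
  have ha0 : a0 ∈ WA := hmemWA he0 (Sym2.out_fst_mem e0)
  have ha0v : a0 ∈ C.verts := hWAverts a0 ha0
  have hreach := hCconn ⟨a0, ha0v⟩ ⟨s0, hs0v⟩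
  obtain ⟨p⟩ := hreach
  have hwalk : ∀ (x y : C.verts) (q : C.coe.Walk x y), ↑x ∈ WA → ↑y ∈ WA := by
    intro x y q
    induction q with
    | nil => exact id
    | cons h q ih =>
      intro hx
      exact ih (closure _ _ hx h)
  have hs0WA : s0 ∈ WA := hwalk _ _ p ha0
  rw [hWA] at hs0WA
  obtain ⟨e, he, hse⟩ := Finset.mem_biUnion.mp hs0WA
  simp only [Finset.mem_filter] at hse
  exact (hA e he).2 s0 hse.2 hs0S

section AuxCore
variable {V : Type*}

private lemma aux_sym2_rep {α : Type*} (e : Sym2 α) : ∃ a b, e = s(a, b) := by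
  induction e using Sym2.ind with
  | _ a b => exact ⟨a, b, rfl⟩

private lemma aux_subgraph_finite {V : Type*} [Finite V] (G : SimpleGraph V) :
    Finite G.Subgraph := by
  have : Function.Injective (fun H : G.Subgraph => (H.verts, H.Adj)) := by
    intro H H' h
    rw [Prod.mk.injEq] at h
    exact SimpleGraph.Subgraph.ext h.1 h.2
  exact Finite.of_injective _ this

private lemma aux_start_mem_tail {G : SimpleGraph V} {u : V} (p : G.Walk u u) (hnil : ¬p.Nil) :
    u ∈ p.support.tail := by
  cases p with
  | nil => simp at hnil
  | cons h q => simpa using q.end_mem_support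

private lemma aux_mem_support {G : SimpleGraph V} {u w : V} {x : V} {e : Sym2 V}
    (p : G.Walk u w) (he : e ∈ p.edges) (hx : x ∈ e) : x ∈ p.support := by
  induction e using Sym2.ind with
  | _ a b =>
    rcases Sym2.mem_iff.mp hx with rfl | rfl
    · exact p.fst_mem_support_of_mem_edges he
    · exact p.snd_mem_support_of_mem_edges he

lemma aux_core [Fintype V] {G : SimpleGraph V} {𝒞 : Set G.Subgraph}
    (hdec : IsCycleDecomposition G 𝒞) {T : SimpleGraph 𝒞} (hT : T.IsTree) (S : Set V)
    (H1 : ∀ C ∈ 𝒞, ∃ s ∈ SimpleGraph.Subgraph.verts C, s ∈ S)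
    (H2 : ∀ v, v ∉ S → ∀ (c c' : 𝒞), c ≠ c' → v ∈ (c : G.Subgraph).verts →
      v ∈ (c' : G.Subgraph).verts →
      T.Adj c c' ∧ ∀ D ∈ 𝒞, v ∈ D.verts → D = (c : G.Subgraph) ∨ D = (c' : G.Subgraph))
    (H3 : ∀ v, v ∉ S → ∀ w, w ∉ S → ∀ (c c' : 𝒞), c ≠ c' → v ∈ (c : G.Subgraph).verts →
      v ∈ (c' : G.Subgraph).verts → w ∈ (c : G.Subgraph).verts →
      w ∈ (c' : G.Subgraph).verts → v = w) :
    IsDecyclingSet G S := by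
  classical
  intro v0 p hp
  haveI : Nonempty G.Subgraph := ⟨⊥⟩
  -- the edge set of the cycle, transported to V
  set L : List (Sym2 V) := p.edges.map (Sym2.map (Subtype.val : ↥Sᶜ → V)) with hL
  set B : Finset (Sym2 V) := L.toFinset with hB
  have hLnodup : L.Nodup :=
    (hp.isCircuit.isTrail.edges_nodup).map (Sym2.map.injective Subtype.val_injective)
  have hBcard : B.card = p.length := by
    rw [hB, List.toFinset_card_of_nodup hLnodup, hL, List.length_map, p.length_edges]
  have hBprops : ∀ e ∈ B, e ∈ G.edgeSet ∧ ∀ x ∈ e, x ∉ S := by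
    intro e he
    rw [hB, List.mem_toFinset, hL, List.mem_map] at he
    obtain ⟨e', he', rfl⟩ := he
    have hGe' := p.edges_subset_edgeSet he'
    constructor
    · revert hGe'
      induction e' using Sym2.ind with
      | _ a b =>
        intro hGe'
        rw [SimpleGraph.mem_edgeSet] at hGe'
        rw [Sym2.map_pair_eq, SimpleGraph.mem_edgeSet]
        exact hGe'
    · intro x hx
      rw [Sym2.mem_map] at hx
      obtain ⟨y, _, rfl⟩ := hx
      exact y.2
  have hBne : B.Nonempty := by
    rw [← Finset.card_pos, hBcard]
    have := hp.three_le_length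
    omega
  set W : Finset V := B.biUnion (fun e => Finset.univ.filter (· ∈ e)) with hW
  have hWcard : W.card ≤ B.card := by
    have hsub : W ⊆ (p.support.tail.map Subtype.val).toFinset := by
      intro x hx
      rw [hW] at hx
      obtain ⟨e, he, hxe⟩ := Finset.mem_biUnion.mp hx
      simp only [Finset.mem_filter, Finset.mem_univ, true_and] at hxe
      rw [hB, List.mem_toFinset, hL, List.mem_map] at he
      obtain ⟨e', he', rfl⟩ := he
      rw [Sym2.mem_map] at hxe
      obtain ⟨y, hy, rfl⟩ := hxe
      have hysup : y ∈ p.support := aux_mem_support p he' hy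
      have hytail : y ∈ p.support.tail := by
        rcases (List.mem_cons.mp (by rwa [← p.support_eq_cons] )) with rfl | h
        · exact aux_start_mem_tail p hp.not_nil
        · exact h
      rw [List.mem_toFinset, List.mem_map]
      exact ⟨y, hytail, rfl⟩
    calc W.card ≤ (p.support.tail.map Subtype.val).toFinset.card := Finset.card_le_card hsub
      _ = p.length := by
          rw [List.toFinset_card_of_nodup (hp.support_nodup.map Subtype.val_injective),
            List.length_map]
          have h1 := p.length_support
          have h2 : p.support.tail.length = p.support.length - 1 := by
            cases p.support <;> simp
          omega
      _ = B.card := hBcard.symm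
  -- assignment of edges to cycles
  set Cof : Sym2 V → G.Subgraph := fun e =>
    Classical.epsilon (fun C => C ∈ 𝒞 ∧ e ∈ C.edgeSet) with hCofdef
  have hCof : ∀ e ∈ B, Cof e ∈ 𝒞 ∧ e ∈ (Cof e).edgeSet := by
    intro e he
    exact Classical.epsilon_spec (hdec.2 e (hBprops e he).1).exists
  have hCofu : ∀ e ∈ B, ∀ D, D ∈ 𝒞 → e ∈ D.edgeSet → D = Cof e := by
    intro e he D hD hDe
    exact ((hdec.2 e (hBprops e he).1).unique ⟨hD, hDe⟩ (hCof e he))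
  set U : Finset G.Subgraph := B.image Cof with hU
  have hU𝒞 : ∀ C ∈ U, C ∈ 𝒞 := by
    intro C hC
    rw [hU, Finset.mem_image] at hC
    obtain ⟨e, he, rfl⟩ := hC
    exact (hCof e he).1
  have hUne : U.Nonempty := hBne.image Cof
  set AC : G.Subgraph → Finset V :=
    fun C => (B.filter (fun e => Cof e = C)).biUnion (fun e => Finset.univ.filter (· ∈ e))
    with hAC
  have hACsub : ∀ C, AC C ⊆ W := by
    intro C
    rw [hAC, hW]
    exact Finset.biUnion_subset_biUnion_of_subset_left _ (Finset.filter_subset _ _)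
  have hACmem : ∀ C x, x ∈ AC C → (∃ e ∈ B, Cof e = C ∧ x ∈ e) := by
    intro C x hx
    rw [hAC] at hx
    obtain ⟨e, he, hxe⟩ := Finset.mem_biUnion.mp hx
    simp only [Finset.mem_filter, Finset.mem_univ, true_and] at he hxe
    exact ⟨e, he.1, he.2, hxe⟩
  have hACx : ∀ C ∈ U, ∀ x ∈ AC C, x ∈ C.verts ∧ x ∉ S := by
    intro C hC x hx
    obtain ⟨e, heB, heC, hxe⟩ := hACmem C x hx
    have h1 := (hCof e heB).2
    rw [heC] at h1
    exact ⟨SimpleGraph.Subgraph.mem_verts_of_mem_edge h1 hxe, (hBprops e heB).2 x hxe⟩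
  -- step (1): apply the per-cycle bound
  have hstep1 : ∀ C ∈ U, (B.filter (fun e => Cof e = C)).card + 1 ≤ (AC C).card := by
    intro C hC
    have hC𝒞 := hU𝒞 C hC
    obtain ⟨hCconn, hC2⟩ := hdec.1 C hC𝒞
    refine aux_percycle hCconn hC2 (H1 C hC𝒞) _ ?_ ?_
    · intro e he
      rw [Finset.mem_filter] at he
      have h1 := (hCof e he.1).2
      rw [he.2] at h1
      exact ⟨h1, (hBprops e he.1).2⟩
    · rw [hU, Finset.mem_image] at hC
      obtain ⟨e, he, rfl⟩ := hC
      exact ⟨e, Finset.mem_filter.mpr ⟨he, rfl⟩⟩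
  -- multiplicities
  set m : V → ℕ := fun w => (U.filter (fun C => w ∈ AC C)).card with hm
  have hdouble : ∑ C ∈ U, (AC C).card = ∑ w ∈ W, m w := by
    calc ∑ C ∈ U, (AC C).card = ∑ C ∈ U, ∑ w ∈ W, (if w ∈ AC C then 1 else 0) := by
          refine Finset.sum_congr rfl fun C _ => ?_
          rw [← Finset.card_filter]
          congr 1
          ext x
          simp only [Finset.mem_filter]
          exact ⟨fun h => ⟨hACsub C h, h⟩, fun h => h.2⟩
      _ = ∑ w ∈ W, ∑ C ∈ U, (if w ∈ AC C then 1 else 0) := Finset.sum_comm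
      _ = ∑ w ∈ W, m w := by
          refine Finset.sum_congr rfl fun w _ => ?_
          simp only [hm]
          exact (Finset.card_filter _ _).symm
  have hm2 : ∀ w ∈ W, m w ≤ 2 := by
    intro w _
    by_contra hcon
    push_neg at hcon
    simp only [hm] at hcon
    obtain ⟨C1, C2, C3, h1, h2, h3, h12, h13, h23⟩ := Finset.two_lt_card_iff.mp hcon
    simp only [Finset.mem_filter] at h1 h2 h3
    have hw1 := hACx C1 h1.1 w h1.2
    have hw2 := hACx C2 h2.1 w h2.2
    have hw3 := hACx C3 h3.1 w h3.2
    have hc12 : (⟨C1, hU𝒞 C1 h1.1⟩ : 𝒞) ≠ ⟨C2, hU𝒞 C2 h2.1⟩ := by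
      intro h; exact h12 (congrArg Subtype.val h)
    obtain ⟨-, hall⟩ := H2 w hw1.2 ⟨C1, hU𝒞 C1 h1.1⟩ ⟨C2, hU𝒞 C2 h2.1⟩ hc12 hw1.1 hw2.1
    rcases hall C3 (hU𝒞 C3 h3.1) hw3.1 with h | h
    · exact h13 h.symm
    · exact h23 h.symm
  set A2 : Finset V := W.filter (fun w => 2 ≤ m w) with hA2
  have hsum2 : ∑ w ∈ W, m w ≤ W.card + A2.card := by
    calc ∑ w ∈ W, m w ≤ ∑ w ∈ W, (1 + if 2 ≤ m w then 1 else 0) := by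
          refine Finset.sum_le_sum fun w hw => ?_
          have := hm2 w hw
          by_cases h : 2 ≤ m w <;> simp [h] <;> omega
      _ = W.card + A2.card := by
          rw [Finset.sum_add_distrib, Finset.sum_const, smul_eq_mul, mul_one,
            ← Finset.card_filter, hA2]
  -- bound on A2 via tree
  haveI : Finite G.Subgraph := aux_subgraph_finite G
  haveI : Fintype ↥𝒞 := Fintype.ofFinite _
  haveI : Nonempty ↥𝒞 := hT.isConnected.nonempty
  haveI : Nonempty (Sym2 ↥𝒞) := ⟨s(Classical.arbitrary _, Classical.arbitrary _)⟩
  have hA2bound : A2.card + 1 ≤ U.card := by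
    set U' : Finset ↥𝒞 := U.subtype (· ∈ 𝒞) with hU'
    have hU'card : U'.card = U.card := by
      rw [hU', Finset.card_subtype, Finset.filter_true_of_mem hU𝒞]
    set good : V → Sym2 ↥𝒞 → Prop := fun w ee => ee ∈ T.edgeSet ∧
      ∀ d d' : ↥𝒞, ee = s(d, d') → ((d : G.Subgraph) ∈ U ∧ (d' : G.Subgraph) ∈ U ∧
        w ∈ (d : G.Subgraph).verts ∧ w ∈ (d' : G.Subgraph).verts) with hgood
    have hgoodex : ∀ w ∈ A2, ∃ ee, good w ee := by
      intro w hw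
      simp only [hA2, Finset.mem_filter, hm] at hw
      obtain ⟨C1, hC1, C2, hC2, h12⟩ := Finset.one_lt_card.mp (by omega : 1 < (U.filter (fun C => w ∈ AC C)).card)
      simp only [Finset.mem_filter] at hC1 hC2
      have hw1 := hACx C1 hC1.1 w hC1.2
      have hw2 := hACx C2 hC2.1 w hC2.2
      have hc12 : (⟨C1, hU𝒞 C1 hC1.1⟩ : 𝒞) ≠ ⟨C2, hU𝒞 C2 hC2.1⟩ := by
        intro h; exact h12 (congrArg Subtype.val h)
      obtain ⟨hadj, -⟩ := H2 w hw1.2 _ _ hc12 hw1.1 hw2.1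
      refine ⟨s(⟨C1, hU𝒞 C1 hC1.1⟩, ⟨C2, hU𝒞 C2 hC2.1⟩), hadj, ?_⟩
      intro d d' hdd
      rw [Sym2.eq_iff] at hdd
      rcases hdd with ⟨rfl, rfl⟩ | ⟨rfl, rfl⟩
      · exact ⟨hC1.1, hC2.1, hw1.1, hw2.1⟩
      · exact ⟨hC2.1, hC1.1, hw2.1, hw1.1⟩
    set φ : V → Sym2 ↥𝒞 := fun w => Classical.epsilon (good w) with hφ
    have hφspec : ∀ w ∈ A2, good w (φ w) := by
      intro w hw
      simp only [hφ]
      exact Classical.epsilon_spec (hgoodex w hw)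
    set E' : Finset (Sym2 ↥𝒞) := A2.image φ with hE'
    have htree : E'.card + 1 ≤ U'.card := by
      refine aux_tree_edges_within hT U' ?_ E' ?_
      · obtain ⟨C, hC⟩ := hUne
        exact ⟨⟨C, hU𝒞 C hC⟩, by rw [hU']; exact Finset.mem_subtype.mpr hC⟩
      · intro ee hee
        rw [hE', Finset.mem_image] at hee
        obtain ⟨w, hw, rfl⟩ := hee
        obtain ⟨h1, h2⟩ := hφspec w hw
        refine ⟨h1, ?_⟩
        intro x hx
        obtain ⟨y, hy⟩ := Sym2.mem_iff_exists.mp hx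
        obtain ⟨hxU, -, -, -⟩ := h2 x y hy
        rw [hU']
        exact Finset.mem_subtype.mpr hxU
    have hE'card : E'.card = A2.card := by
      rw [hE']
      refine Finset.card_image_of_injOn ?_
      intro w hw w' hw' hww
      simp only [Finset.mem_coe] at hw hw'
      obtain ⟨h1, h2⟩ := hφspec w hw
      obtain ⟨h1', h2'⟩ := hφspec w' hw'
      obtain ⟨d, d', hdd⟩ := aux_sym2_rep (φ w)
      obtain ⟨-, -, hwd, hwd'⟩ := h2 d d' hdd
      obtain ⟨-, -, hw'd, hw'd'⟩ := h2' d d' (by rw [← hww, hdd])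
      have hdne : d ≠ d' := by
        rw [hdd] at h1
        exact ((SimpleGraph.mem_edgeSet T).mp h1).ne
      have hwS : w ∉ S := by
        obtain ⟨C1, hC1, hC1m⟩ : ∃ C ∈ U, w ∈ AC C := by
          simp only [hA2, Finset.mem_filter, hm] at hw
          obtain ⟨C1, hC1⟩ := Finset.card_pos.mp (by omega : 0 < (U.filter (fun C => w ∈ AC C)).card)
          simp only [Finset.mem_filter] at hC1
          exact ⟨C1, hC1.1, hC1.2⟩
        exact (hACx C1 hC1 w hC1m).2
      have hw'S : w' ∉ S := by
        obtain ⟨C1, hC1, hC1m⟩ : ∃ C ∈ U, w' ∈ AC C := by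
          simp only [hA2, Finset.mem_filter, hm] at hw'
          obtain ⟨C1, hC1⟩ := Finset.card_pos.mp (by omega : 0 < (U.filter (fun C => w' ∈ AC C)).card)
          simp only [Finset.mem_filter] at hC1
          exact ⟨C1, hC1.1, hC1.2⟩
        exact (hACx C1 hC1 w' hC1m).2
      exact H3 w hwS w' hw'S d d' hdne hwd hwd' hw'd hw'd'
    rw [hE'card, hU'card] at htree
    exact htree
  -- assemble
  have hsplit : B.card = ∑ C ∈ U, (B.filter (fun e => Cof e = C)).card := by
    rw [hU]
    exact Finset.card_eq_sum_card_image Cof B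
  have hchain : B.card + U.card ≤ W.card + A2.card := by
    calc B.card + U.card = ∑ C ∈ U, ((B.filter (fun e => Cof e = C)).card + 1) := by
          rw [Finset.sum_add_distrib, Finset.sum_const, smul_eq_mul, mul_one, ← hsplit]
      _ ≤ ∑ C ∈ U, (AC C).card := Finset.sum_le_sum hstep1
      _ = ∑ w ∈ W, m w := hdouble
      _ ≤ W.card + A2.card := hsum2
  omega

end AuxCore

/-- Let `G` be a connected even graph and `𝒞` any cycle decomposition of
`G`, with cycle intersection multigraph `CI(G)` (not necessarily simple); `|E(CI(G))|`
counts one edge for each intersection vertex of each pair of distinct cycles.  Then for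
every spanning tree `T` of `CI(G)` (equivalently, of its underlying simple graph),
`∇(G) ≤ (|E(CI(G))| − |V(CI(G))| + 1) + |MSF(T)|`.
(The cycle rank is written `|E| + 1 - |V|` to avoid truncated subtraction.) -/
theorem decyclingNumber_le_cycleRank_add_MSF [Fintype V]
    (G : SimpleGraph V) (hconn : G.Connected) (heven : IsEvenGraph G)
    (𝒞 : Set G.Subgraph) (hdec : IsCycleDecomposition G 𝒞) :
    ∀ T : SimpleGraph 𝒞, T ≤ CIGraph G 𝒞 → T.IsTree →
      decyclingNumber G ≤
        ((CIEdges G 𝒞).ncard + 1 - Nat.card 𝒞) + MSF T := by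
  intro T hTle hT
  classical
  haveI : Finite G.Subgraph := aux_subgraph_finite G
  haveI : Fintype ↥𝒞 := Fintype.ofFinite _
  haveI hne𝒞 : Nonempty ↥𝒞 := hT.isConnected.nonempty
  obtain ⟨c0⟩ := hne𝒞
  haveI : Nonempty (Sym2 ↥𝒞) := ⟨s(c0, c0)⟩
  haveI : Nonempty V := by
    obtain ⟨x, -⟩ := ((hdec.1 _ c0.2).1).nonempty
    exact ⟨x⟩
  have hccne : ∀ {c c' : ↥𝒞}, c ≠ c' → (c : G.Subgraph) ≠ (c' : G.Subgraph) :=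
    fun h hh => h (Subtype.ext hh)
  have hcoene : ∀ {c c' : ↥𝒞}, (c : G.Subgraph) ≠ (c' : G.Subgraph) → c ≠ c' :=
    fun h hh => h (congrArg Subtype.val hh)
  -- a minimum spanning forest of T
  obtain ⟨F, hFT, -, hFsize⟩ :
      ∃ F ≤ T, F.IsAcyclic ∧ forestSize F = MSF T :=
    Nat.sInf_mem (⟨forestSize (⊥ : SimpleGraph ↥𝒞), ⊥, bot_le, isAcyclic_bot, rfl⟩ :
      {n | ∃ F ≤ T, F.IsAcyclic ∧ forestSize F = n}.Nonempty)
  -- the construction of the decycling set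
  set pred : Sym2 ↥𝒞 → V → Prop := fun e v => ∀ c c' : ↥𝒞, e = s(c, c') →
    (v ∈ (c : G.Subgraph).verts ∧ v ∈ (c' : G.Subgraph).verts ∧
      ∀ D ∈ 𝒞, v ∈ D.verts → D = (c : G.Subgraph) ∨ D = (c' : G.Subgraph)) with hpred
  set kept : Sym2 ↥𝒞 → V := fun e => Classical.epsilon (pred e) with hkept
  set Cov : Set (Sym2 ↥𝒞) := {e | (e ∈ T.edgeSet ∧ e ∉ F.edgeSet) ∧ ∃ v, pred e v} with hCov
  set Unc : Set (Sym2 ↥𝒞) := {e | (e ∈ T.edgeSet ∧ e ∉ F.edgeSet) ∧ ¬∃ v, pred e v} with hUnc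
  set K : Set V := kept '' Cov with hK
  set S0 : Set V := {v | ∃ C ∈ 𝒞, ∃ C' ∈ 𝒞, C ≠ C' ∧
    v ∈ SimpleGraph.Subgraph.verts C ∧ v ∈ SimpleGraph.Subgraph.verts C'} with hS0
  set Iso : Set ↥𝒞 := {c | ∀ c', ¬ F.Adj c c'} with hIso
  set xval : ↥𝒞 → V := fun c => Classical.epsilon (· ∈ (c : G.Subgraph).verts) with hxval
  have hxval_spec : ∀ c : ↥𝒞, xval c ∈ (c : G.Subgraph).verts := fun c =>
    Classical.epsilon_spec ((hdec.1 _ c.2).1.nonempty)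
  set X : Set V := xval '' Iso with hX
  set S : Set V := (S0 \ K) ∪ X with hS
  -- basic facts
  have hkept_spec : ∀ e ∈ Cov, pred e (kept e) := by
    intro e he
    rw [hCov] at he
    simp only [hkept]
    exact Classical.epsilon_spec he.2
  have helper : ∀ (e : Sym2 ↥𝒞) (v : V), pred e v → ∀ (c c' : ↥𝒞), c ≠ c' →
      v ∈ (c : G.Subgraph).verts → v ∈ (c' : G.Subgraph).verts → e = s(c, c') := by
    intro e v hp c c' hnecc h1 h2
    obtain ⟨d, d', rfl⟩ := aux_sym2_rep e
    obtain ⟨hd, hd', hall⟩ := hp d d' rfl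
    rcases hall _ c.2 h1 with h | h
    · rcases hall _ c'.2 h2 with h' | h'
      · exact absurd (Subtype.ext (h.trans h'.symm)) hnecc
      · rw [Subtype.ext h, Subtype.ext h']
    · rcases hall _ c'.2 h2 with h' | h'
      · rw [Subtype.ext h, Subtype.ext h', Sym2.eq_swap]
      · exact absurd (Subtype.ext (h.trans h'.symm)) hnecc
  have hKmem : ∀ v ∈ K, ∃ e ∈ Cov, kept e = v := by
    intro v hv
    rw [hK] at hv
    obtain ⟨e, he, hev⟩ := hv
    exact ⟨e, he, hev⟩
  -- every vertex not in S lying on two distinct cycles is a kept vertex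
  have hkey : ∀ v, v ∉ S → ∀ (c c' : ↥𝒞), c ≠ c' → v ∈ (c : G.Subgraph).verts →
      v ∈ (c' : G.Subgraph).verts →
      (s(c, c') ∈ T.edgeSet ∧ s(c, c') ∉ F.edgeSet) ∧ pred s(c, c') v ∧ kept s(c, c') = v := by
    intro v hvS c c' hnecc h1 h2
    have hvS0 : v ∈ S0 := by
      rw [hS0]
      exact ⟨c, c.2, c', c'.2, hccne hnecc, h1, h2⟩
    have hvK : v ∈ K := by
      by_contra hvK
      exact hvS (Or.inl ⟨hvS0, hvK⟩)
    obtain ⟨e, heCov, hev⟩ := hKmem v hvK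
    have hp : pred e v := by rw [← hev] at *; exact hkept_spec e heCov
    have hee : e = s(c, c') := helper e v hp c c' hnecc h1 h2
    rw [hee] at heCov hp hev
    rw [hCov] at heCov
    exact ⟨heCov.1, hp, hev⟩
  -- H1 : every cycle meets S
  have H1 : ∀ C ∈ 𝒞, ∃ s ∈ SimpleGraph.Subgraph.verts C, s ∈ S := by
    intro C hC
    set c : ↥𝒞 := ⟨C, hC⟩ with hc
    by_cases hiso : c ∈ Iso
    · exact ⟨xval c, hxval_spec c, Or.inr ⟨c, hiso, rfl⟩⟩
    · simp only [hIso, Set.mem_setOf_eq, not_forall, not_not] at hiso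
      obtain ⟨c', hadj⟩ := hiso
      have hTadj : T.Adj c c' := hFT hadj
      obtain ⟨v, hv1, hv2⟩ := (hTle hTadj).2
      refine ⟨v, hv1, ?_⟩
      by_contra hvS
      have := hkey v hvS c c' hTadj.ne hv1 hv2
      exact this.1.2 ((F.mem_edgeSet).mpr hadj)
  have H2 : ∀ v, v ∉ S → ∀ (c c' : ↥𝒞), c ≠ c' → v ∈ (c : G.Subgraph).verts →
      v ∈ (c' : G.Subgraph).verts →
      T.Adj c c' ∧ ∀ D ∈ 𝒞, v ∈ D.verts → D = (c : G.Subgraph) ∨ D = (c' : G.Subgraph) := by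
    intro v hvS c c' hnecc h1 h2
    obtain ⟨⟨hTE, -⟩, hp, -⟩ := hkey v hvS c c' hnecc h1 h2
    exact ⟨(T.mem_edgeSet).mp hTE, (hp c c' rfl).2.2⟩
  have H3 : ∀ v, v ∉ S → ∀ w, w ∉ S → ∀ (c c' : ↥𝒞), c ≠ c' →
      v ∈ (c : G.Subgraph).verts → v ∈ (c' : G.Subgraph).verts →
      w ∈ (c : G.Subgraph).verts → w ∈ (c' : G.Subgraph).verts → v = w := by
    intro v hvS w hwS c c' hnecc hv1 hv2 hw1 hw2
    obtain ⟨-, -, hv⟩ := hkey v hvS c c' hnecc hv1 hv2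
    obtain ⟨-, -, hw⟩ := hkey w hwS c c' hnecc hw1 hw2
    rw [← hv, ← hw]
  -- S is a decycling set
  have hSdec : IsDecyclingSet G S := aux_core hdec hT S H1 H2 H3
  -- counting
  have hKS0 : K ⊆ S0 := by
    intro v hv
    obtain ⟨e, heCov, hev⟩ := hKmem v hv
    have hp : pred e v := by rw [← hev] at *; exact hkept_spec e heCov
    obtain ⟨c, c', rfl⟩ := aux_sym2_rep e
    obtain ⟨hc1, hc2, -⟩ := hp c c' rfl
    rw [hCov] at heCov
    have hTadj : T.Adj c c' := (T.mem_edgeSet).mp heCov.1.1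
    rw [hS0]
    exact ⟨c, c.2, c', c'.2, hccne hTadj.ne, hc1, hc2⟩
  have hKinj : Set.InjOn kept Cov := by
    intro e he e' he' hee
    have hp : pred e (kept e) := hkept_spec e he
    have hp' : pred e' (kept e) := by rw [hee]; exact hkept_spec e' he'
    obtain ⟨c, c', rfl⟩ := aux_sym2_rep e'
    have hTadj : T.Adj c c' := by
      rw [hCov] at he'
      exact (T.mem_edgeSet).mp he'.1.1
    obtain ⟨h1, h2, -⟩ := hp' c c' rfl
    exact helper e (kept e) hp c c' hTadj.ne h1 h2
  -- injections into CIEdges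
  set pcommon : Sym2 ↥𝒞 → V → Prop := fun e v => ∀ c c' : ↥𝒞, e = s(c, c') →
    (v ∈ (c : G.Subgraph).verts ∧ v ∈ (c' : G.Subgraph).verts) with hpcommon
  set χ : Sym2 ↥𝒞 → V := fun e => Classical.epsilon (pcommon e) with hχ
  have hχspec : ∀ e ∈ T.edgeSet, pcommon e (χ e) := by
    intro e he
    simp only [hχ]
    refine Classical.epsilon_spec ?_
    obtain ⟨c, c', rfl⟩ := aux_sym2_rep e
    obtain ⟨v, hv1, hv2⟩ := (hTle ((T.mem_edgeSet).mp he)).2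
    refine ⟨v, ?_⟩
    intro d d' hdd
    rw [Sym2.eq_iff] at hdd
    rcases hdd with ⟨rfl, rfl⟩ | ⟨rfl, rfl⟩
    · exact ⟨hv1, hv2⟩
    · exact ⟨hv2, hv1⟩
  set goodp : V → Sym2 ↥𝒞 → Prop := fun v p => ∀ c c' : ↥𝒞, p = s(c, c') →
    (c ≠ c' ∧ v ∈ (c : G.Subgraph).verts ∧ v ∈ (c' : G.Subgraph).verts ∧
      (T.Adj c c' → ∀ d d' : ↥𝒞, d ≠ d' → v ∈ (d : G.Subgraph).verts →
        v ∈ (d' : G.Subgraph).verts → T.Adj d d')) with hgoodp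
  set π : V → Sym2 ↥𝒞 := fun v => Classical.epsilon (goodp v) with hπ
  have hπspec : ∀ v ∈ S0, goodp v (π v) := by
    intro v hv
    simp only [hπ]
    refine Classical.epsilon_spec ?_
    rw [hS0] at hv
    obtain ⟨C, hC, C', hC', hCC, h1, h2⟩ := hv
    by_cases hna : ∃ d d' : ↥𝒞, d ≠ d' ∧ v ∈ (d : G.Subgraph).verts ∧
        v ∈ (d' : G.Subgraph).verts ∧ ¬T.Adj d d'
    · obtain ⟨d, d', hdd, hd1, hd2, hdna⟩ := hna
      refine ⟨s(d, d'), ?_⟩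
      intro x y hxy
      rw [Sym2.eq_iff] at hxy
      rcases hxy with ⟨rfl, rfl⟩ | ⟨rfl, rfl⟩
      · exact ⟨hdd, hd1, hd2, fun ha => absurd ha hdna⟩
      · exact ⟨hdd.symm, hd2, hd1, fun ha => absurd ha.symm hdna⟩
    · push_neg at hna
      refine ⟨s((⟨C, hC⟩ : ↥𝒞), (⟨C', hC'⟩ : ↥𝒞)), ?_⟩
      intro x y hxy
      rw [Sym2.eq_iff] at hxy
      have hcc : (⟨C, hC⟩ : ↥𝒞) ≠ ⟨C', hC'⟩ := hcoene hCC
      rcases hxy with ⟨rfl, rfl⟩ | ⟨rfl, rfl⟩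
      · exact ⟨hcc, h1, h2, fun _ d d' hdd hd1 hd2 => hna d d' hdd hd1 hd2⟩
      · exact ⟨hcc.symm, h2, h1, fun _ d d' hdd hd1 hd2 => hna d d' hdd hd1 hd2⟩
  set Φ1 : V → (Sym2 G.Subgraph × V) :=
    fun v => (Sym2.map (Subtype.val) (π v), v) with hΦ1
  set Φ2 : Sym2 ↥𝒞 → (Sym2 G.Subgraph × V) :=
    fun e => (Sym2.map (Subtype.val) e, χ e) with hΦ2
  have hΦ1mem : ∀ v ∈ S0, Φ1 v ∈ CIEdges G 𝒞 := by
    intro v hv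
    obtain ⟨c, c', hrep⟩ := aux_sym2_rep (π v)
    obtain ⟨hnecc, h1, h2, -⟩ := hπspec v hv c c' hrep
    refine ⟨c, c.2, c', c'.2, v, hccne hnecc, ⟨h1, h2⟩, ?_⟩
    simp only [hΦ1, hrep, Sym2.map_pair_eq]
  have hΦ2mem : ∀ e ∈ Unc, Φ2 e ∈ CIEdges G 𝒞 := by
    intro e he
    have heTE : e ∈ T.edgeSet := by rw [hUnc] at he; exact he.1.1
    obtain ⟨c, c', hrep⟩ := aux_sym2_rep e
    obtain ⟨h1, h2⟩ := hχspec e heTE c c' hrep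
    have hTadj : T.Adj c c' := by rw [hrep] at heTE; exact (T.mem_edgeSet).mp heTE
    refine ⟨c, c.2, c', c'.2, χ e, hccne hTadj.ne, ⟨h1, h2⟩, ?_⟩
    simp only [hΦ2, hrep, Sym2.map_pair_eq]
  have hΦ1inj : Set.InjOn Φ1 S0 := by
    intro v _ w _ hvw
    simp only [hΦ1, Prod.mk.injEq] at hvw
    exact hvw.2
  have hΦ2inj : Set.InjOn Φ2 Unc := by
    intro e _ e' _ hee
    simp only [hΦ2, Prod.mk.injEq] at hee
    exact Sym2.map.injective Subtype.val_injective hee.1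
  have hdisj : Disjoint (Φ1 '' S0) (Φ2 '' Unc) := by
    rw [Set.disjoint_left]
    rintro x ⟨v, hv, rfl⟩ ⟨e, he, heq⟩
    simp only [hΦ1, hΦ2, Prod.mk.injEq] at heq
    have hπe : π v = e := (Sym2.map.injective Subtype.val_injective heq.1).symm
    have hve : v = χ e := heq.2.symm
    have heTE : e ∈ T.edgeSet := by rw [hUnc] at he; exact he.1.1
    obtain ⟨c, c', hrep⟩ := aux_sym2_rep e
    have hTadj : T.Adj c c' := by rw [hrep] at heTE; exact (T.mem_edgeSet).mp heTE
    obtain ⟨hnecc, h1, h2, hlast⟩ := hπspec v hv c c' (by rw [hπe, hrep])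
    have hall := hlast hTadj
    have hnp : ¬ pred e v := by
      intro hp
      rw [hUnc] at he
      exact he.2 ⟨v, hp⟩
    apply hnp
    by_cases hD : ∀ D ∈ 𝒞, v ∈ D.verts → D = (c : G.Subgraph) ∨ D = (c' : G.Subgraph)
    · intro d d' hdd
      rw [hrep] at hdd
      rw [Sym2.eq_iff] at hdd
      rcases hdd with ⟨rfl, rfl⟩ | ⟨rfl, rfl⟩
      · exact ⟨h1, h2, hD⟩
      · refine ⟨h2, h1, ?_⟩
        intro D hDm hDv
        rcases hD D hDm hDv with h | h
        · exact Or.inr h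
        · exact Or.inl h
    · exfalso
      push_neg at hD
      obtain ⟨D, hDm, hDv, hDc, hDc'⟩ := hD
      set d2 : ↥𝒞 := ⟨D, hDm⟩ with hd2
      have hd2c : d2 ≠ c := hcoene hDc
      have hd2c' : d2 ≠ c' := hcoene hDc'
      have ha1 : T.Adj d2 c := hall d2 c hd2c hDv h1
      have ha2 : T.Adj c' d2 := hall c' d2 hd2c'.symm h2 hDv
      exact aux_no_triangle hT.IsAcyclic hTadj ha2 ha1
  -- cardinality bookkeeping
  have e1 : S.ncard ≤ (S0 \ K).ncard + X.ncard := by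
    rw [hS]; exact Set.ncard_union_le _ _
  have e2 : X.ncard ≤ Iso.ncard := by
    rw [hX]; exact Set.ncard_image_le (Set.toFinite _)
  have e3 : (S0 \ K).ncard + K.ncard = S0.ncard :=
    Set.ncard_diff_add_ncard_of_subset hKS0 (Set.toFinite _)
  have e4 : K.ncard = Cov.ncard := by
    rw [hK]; exact Set.ncard_image_of_injOn hKinj
  have e5 : T.edgeSet.ncard + 1 = Nat.card ↥𝒞 := by
    rw [Set.ncard_eq_toFinset_card', Nat.card_eq_fintype_card]
    exact hT.card_edgeFinset
  have e6 : T.edgeSet.ncard = F.edgeSet.ncard + (Cov.ncard + Unc.ncard) := by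
    have hsub : F.edgeSet ⊆ T.edgeSet := SimpleGraph.edgeSet_mono hFT
    have hdiff : (T.edgeSet \ F.edgeSet).ncard + F.edgeSet.ncard = T.edgeSet.ncard :=
      Set.ncard_diff_add_ncard_of_subset hsub (Set.toFinite _)
    have hpart : T.edgeSet \ F.edgeSet = Cov ∪ Unc := by
      ext e
      rw [hCov, hUnc]
      simp only [Set.mem_diff, Set.mem_union, Set.mem_setOf_eq]
      constructor
      · intro h
        by_cases hex : ∃ v, pred e v
        · exact Or.inl ⟨h, hex⟩
        · exact Or.inr ⟨h, hex⟩
      · rintro (⟨h, -⟩ | ⟨h, -⟩) <;> exact h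
    have hdisj2 : Disjoint Cov Unc := by
      rw [Set.disjoint_left, hCov, hUnc]
      rintro e ⟨-, hex⟩ ⟨-, hnex⟩
      exact hnex hex
    rw [hpart, Set.ncard_union_eq hdisj2 (Set.toFinite _) (Set.toFinite _)] at hdiff
    omega
  have e7 : F.edgeSet.ncard + Iso.ncard = MSF T := hFsize
  have e8 : S0.ncard + Unc.ncard ≤ (CIEdges G 𝒞).ncard := by
    have hsub : (Φ1 '' S0) ∪ (Φ2 '' Unc) ⊆ CIEdges G 𝒞 := by
      rintro x (⟨v, hv, rfl⟩ | ⟨e, he, rfl⟩)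
      · exact hΦ1mem v hv
      · exact hΦ2mem e he
    have := Set.ncard_le_ncard hsub (Set.toFinite _)
    rw [Set.ncard_union_eq hdisj (Set.toFinite _) (Set.toFinite _),
      Set.ncard_image_of_injOn hΦ1inj, Set.ncard_image_of_injOn hΦ2inj] at this
    exact this
  have hmain : decyclingNumber G ≤ S.ncard :=
    Nat.sInf_le ⟨S, hSdec, rfl⟩
  have hNat : Nat.card ↥𝒞 = Nat.card 𝒞 := rfl
  omega
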